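/- Let char F ≠ 2, K/F finite, σ ∈ Aut_F(K) nontrivial, c ∈ K^×. The automorphism group of D(K,σ,c) has exactly 2·|J(c) ∩ C(σ)| elements, where C(σ) is the centralizer of σ in Aut_F(K) and J(c) = {τ : τ(c)c⁻¹ ∈ K^{×2}}. -/

import Mathlib

/-- The Dickson doubling multiplication on `B ⊕ B`. -/
def dicksonMul {B : Type*} [Ring B] (σ : B → B) (c : B) (p q : B × B) : B × B :=
  (p.1 * q.1 + c * σ (p.2 * q.2), p.1 * q.2 + p.2 * q.1)

/-- `G` is an isomorphism of `F`-algebras `D(K,σ,c) → D(L,φ,d)`: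
a bijective `F`-linear multiplicative map. -/
def IsDicksonIso (F : Type*) {K L : Type*} [Field F] [Field K] [Field L]
    [Algebra F K] [Algebra F L] (σ : K → K) (c : K) (φ : L → L) (d : L)
    (G : K × K → L × L) : Prop :=
  Function.Bijective G ∧ (∀ p q : K × K, G (p + q) = G p + G q) ∧
    (∀ (a : F) (p : K × K), G (a • p) = a • G p) ∧
    (∀ p q : K × K, G (dicksonMul σ c p q) = dicksonMul φ d (G p) (G q))

section Aux

variable {F K : Type*} [Field F] [Field K] [Algebra F K]

lemma two_ne_zero_of_base (hF : ringChar F ≠ 2) : (2 : K) ≠ 0 := by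
  have h2F : (2 : F) ≠ 0 := Ring.two_ne_zero hF
  intro h
  apply h2F
  apply (algebraMap F K).injective
  rw [map_ofNat, map_zero]
  simpa using h

/-- The standard form maps are Dickson isomorphisms. -/
lemma form_isDicksonIso (σ : K ≃ₐ[F] K) (c : K) (hc : c ≠ 0) (τ : K ≃ₐ[F] K) (b : K)
    (hcomm : ∀ x, τ (σ x) = σ (τ x)) (hb : c * σ (b * b) = τ c) :
    IsDicksonIso F (⇑σ) c (⇑σ) c (fun p => (τ p.1, τ p.2 * b)) := by
  have hbne : b ≠ 0 := by
    rintro rfl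
    rw [mul_zero, map_zero, mul_zero] at hb
    exact hc (τ.injective (by simpa using hb.symm))
  refine ⟨?_, ?_, ?_, ?_⟩
  · refine Function.bijective_iff_has_inverse.mpr
      ⟨fun q => (τ.symm q.1, τ.symm (q.2 * b⁻¹)), fun p => ?_, fun q => ?_⟩
    · simp [mul_assoc, mul_inv_cancel₀ hbne]
    · simp [mul_assoc, inv_mul_cancel₀ hbne]
  · intro p q
    simp [Prod.ext_iff, map_add, add_mul]
  · intro a p
    simp [Prod.ext_iff, map_smul, smul_mul_assoc]
  · intro p q
    simp only [dicksonMul, Prod.ext_iff, Prod.mk.injEq, map_add, map_mul, hcomm, ← hb]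
    constructor <;> ring

/-- Every Dickson isomorphism has the standard form. -/
lemma isDicksonIso_form [FiniteDimensional F K] (σ : K ≃ₐ[F] K) (hσ : σ ≠ AlgEquiv.refl)
    (c : K) (hc : c ≠ 0) (hF : ringChar F ≠ 2) (G : K × K → K × K)
    (hG : IsDicksonIso F (⇑σ) c (⇑σ) c G) :
    ∃ (τ : K ≃ₐ[F] K) (b : K), (∀ x, τ (σ x) = σ (τ x)) ∧ c * σ (b * b) = τ c ∧
      G = fun p => (τ p.1, τ p.2 * b) := by
  obtain ⟨⟨hinj, hsurj⟩, hadd, hsmul, hmul⟩ := hG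
  have h2 : (2 : K) ≠ 0 := two_ne_zero_of_base hF
  obtain ⟨e, he⟩ : ∃ e : K, σ e ≠ e := by
    by_contra h
    push_neg at h
    exact hσ (AlgEquiv.ext fun x => h x)
  -- G (1,0) = (1,0)
  have hG1 : G (1, 0) = (1, 0) := by
    obtain ⟨p₀, hp₀⟩ := hsurj (1, 0)
    have key : dicksonMul (⇑σ) c p₀ ((1 : K), (0 : K)) = p₀ := by
      simp [dicksonMul]
    have h1 : ((1 : K), (0 : K)) = dicksonMul (⇑σ) c (1, 0) (G (1, 0)) := by
      calc ((1 : K), (0 : K)) = G p₀ := hp₀.symm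
        _ = G (dicksonMul (⇑σ) c p₀ (1, 0)) := by rw [key]
        _ = dicksonMul (⇑σ) c (G p₀) (G (1, 0)) := hmul _ _
        _ = dicksonMul (⇑σ) c (1, 0) (G (1, 0)) := by rw [hp₀]
    rw [show dicksonMul (⇑σ) c ((1 : K), (0 : K)) (G (1, 0)) = G (1, 0) by
      simp [dicksonMul]] at h1
    exact h1.symm
  -- middle nucleus computations
  have midl : ∀ (s : K) (p q : K × K),
      dicksonMul (⇑σ) c (dicksonMul (⇑σ) c p (s, 0)) q
        = dicksonMul (⇑σ) c p (dicksonMul (⇑σ) c (s, 0) q) := by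
    intro s p q
    simp only [dicksonMul, Prod.ext_iff, mul_zero, zero_mul, map_zero, add_zero, mul_one,
      zero_add, map_mul, Prod.mk.injEq]
    constructor <;> ring
  have midr : ∀ z : K × K,
      (∀ p q : K × K, dicksonMul (⇑σ) c (dicksonMul (⇑σ) c p z) q
        = dicksonMul (⇑σ) c p (dicksonMul (⇑σ) c z q)) → z.2 = 0 := by
    intro z hz
    have h := hz (0, 1) (e, 0)
    simp only [dicksonMul, Prod.ext_iff, zero_mul, one_mul, mul_zero, mul_one, map_zero,
      map_one, map_mul, zero_add, add_zero, Prod.mk.injEq] at h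
    have h1 : c * σ z.2 * e = c * (σ z.2 * σ e) := h.1
    have h2' : σ z.2 * (e - σ e) = 0 := by
      have h1' : c * (σ z.2 * e) = c * (σ z.2 * σ e) := by linear_combination h1
      linear_combination mul_left_cancel₀ hc h1'
    rcases mul_eq_zero.mp h2' with h3 | h3
    · exact σ.injective (by simpa using h3)
    · exact absurd (sub_eq_zero.mp h3).symm he
  -- G preserves the middle nucleus K × 0
  have hpres : ∀ x : K, (G (x, 0)).2 = 0 := by
    intro x
    apply midr
    intro p q
    obtain ⟨p', hp'⟩ := hsurj p
    obtain ⟨q', hq'⟩ := hsurj q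
    subst hp' hq'
    rw [← hmul, ← hmul, ← hmul, ← hmul]
    exact congrArg G (midl x p' q')
  set t : K → K := fun x => (G (x, 0)).1 with ht
  have hGx : ∀ x : K, G (x, 0) = (t x, 0) := fun x => Prod.ext rfl (hpres x)
  have tadd : ∀ x y : K, t (x + y) = t x + t y := by
    intro x y
    have h := hadd (x, 0) (y, 0)
    rw [show ((x : K), (0 : K)) + (y, 0) = (x + y, 0) by simp, hGx, hGx, hGx] at h
    exact congrArg Prod.fst h
  have tmul : ∀ x y : K, t (x * y) = t x * t y := by
    intro x y
    have h := hmul (x, 0) (y, 0)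
    rw [show dicksonMul (⇑σ) c ((x : K), (0 : K)) (y, 0) = (x * y, 0) by simp [dicksonMul],
      hGx, hGx, hGx,
      show dicksonMul (⇑σ) c ((t x : K), (0 : K)) (t y, 0) = (t x * t y, 0) by
        simp [dicksonMul]] at h
    exact congrArg Prod.fst h
  have t1 : t 1 = 1 := by rw [ht]; simp [hG1]
  have hG0 : G 0 = 0 := by
    have h := hadd 0 0
    rw [add_zero] at h
    exact left_eq_add.mp h
  have t0 : t 0 = 0 := by simpa using congrArg Prod.fst (show G (0, 0) = 0 from hG0)
  have tsmul : ∀ (a : F) (x : K), t (a • x) = a • t x := by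
    intro a x
    have h := hsmul a (x, 0)
    rw [show (a • ((x : K), (0 : K))) = (a • x, 0) by simp, hGx, hGx] at h
    have := congrArg Prod.fst h
    simpa using this
  have tinj : Function.Injective t := by
    intro x y hxy
    have : G (x, 0) = G (y, 0) := by rw [hGx, hGx, hxy]
    simpa using congrArg Prod.fst (hinj this)
  have tsurj : Function.Surjective t := by
    have := LinearMap.injective_iff_surjective
      (f := ({ toFun := t, map_add' := tadd, map_smul' := tsmul } : K →ₗ[F] K))
    exact this.mp tinj
  have tcommF : ∀ a : F, t (algebraMap F K a) = algebraMap F K a := by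
    intro a
    rw [Algebra.algebraMap_eq_smul_one, tsmul, t1]
  set τ : K ≃ₐ[F] K := AlgEquiv.ofBijective
    ⟨⟨⟨⟨t, t1⟩, tmul⟩, t0, tadd⟩, tcommF⟩ ⟨tinj, tsurj⟩ with hτdef
  have hτ : ∀ x, τ x = t x := fun _ => rfl
  -- the image of (0,1)
  set b : K := (G (0, 1)).2 with hbdef
  set s : K := (G (0, 1)).1 with hsdef
  have hsq : (t c, (0 : K)) = (s * s + c * σ (b * b), s * b + b * s) := by
    have h := hmul (0, 1) (0, 1)
    rw [show dicksonMul (⇑σ) c ((0 : K), (1 : K)) (0, 1) = (c, 0) by simp [dicksonMul],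
      hGx] at h
    rw [h]
    simp [dicksonMul]
    constructor <;> rfl
  have hsb : s * b = 0 := by
    have h := congrArg Prod.snd hsq
    simp only at h
    have h' : 2 * (s * b) = 0 := by linear_combination -h
    rcases mul_eq_zero.mp h' with h'' | h''
    · exact absurd h'' h2
    · exact h''
  have hG01' : G (0, 1) = (s, b) := Prod.ext hsdef.symm hbdef.symm
  have hbne : b ≠ 0 := by
    intro hb0
    obtain ⟨x, hx⟩ := tsurj s
    have hxe : G (x, 0) = G (0, 1) := by rw [hGx, hx, hG01', hb0]
    exact zero_ne_one (congrArg Prod.snd (hinj hxe))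
  have hs0 : s = 0 := by
    rcases mul_eq_zero.mp hsb with h | h
    · exact h
    · exact absurd h hbne
  have hG01 : G (0, 1) = (0, b) := by rw [hG01', hs0]
  have htc : c * σ (b * b) = t c := by
    have h := congrArg Prod.fst hsq
    simp only at h
    rw [hs0] at h
    linear_combination -h
  have hGy : ∀ y : K, G (0, y) = (0, t y * b) := by
    intro y
    have h := hmul (y, 0) (0, 1)
    rw [show dicksonMul (⇑σ) c ((y : K), (0 : K)) (0, 1) = (0, y) by simp [dicksonMul],
      hGx, hG01] at h
    rw [h]
    simp [dicksonMul]
  have hGform : ∀ p : K × K, G p = (t p.1, t p.2 * b) := by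
    intro p
    have h := hadd (p.1, 0) (0, p.2)
    rw [show ((p.1 : K), (0 : K)) + (0, p.2) = p by simp, hGx, hGy] at h
    rw [h]
    simp
  have tcommσ : ∀ y : K, t (σ y) = σ (t y) := by
    intro y
    have h := hmul (0, 1) (0, y)
    rw [show dicksonMul (⇑σ) c ((0 : K), (1 : K)) (0, y) = (c * σ y, 0) by
        simp [dicksonMul], hGx, hG01, hGy] at h
    have h1 := congrArg Prod.fst h
    simp only [dicksonMul, zero_mul, mul_zero, zero_add, add_zero, map_mul] at h1
    rw [tmul] at h1
    -- h1 : t c * t (σ y) = c * (σ b * (σ (t y) * σ b))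
    have hσb : σ b ≠ 0 := fun h' => hbne (σ.injective (by simpa using h'))
    have htcne : t c ≠ 0 := by
      intro h'
      exact hc (tinj (by rw [h', t0]))
    apply mul_left_cancel₀ htcne
    rw [h1, ← htc, map_mul]
    ring
  refine ⟨τ, b, fun x => by rw [hτ, hτ, tcommσ], by rw [hτ]; exact htc, funext fun p => ?_⟩
  rw [hGform p]
  simp [hτ]

lemma psi_comm (σ τ : K ≃ₐ[F] K) (h : τ * σ = σ * τ) : ∀ x, τ (σ x) = σ (τ x) := by
  intro x
  have := DFunLike.congr_fun h x
  simpa [AlgEquiv.mul_apply] using this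

lemma psi_cond (σ : K ≃ₐ[F] K) (c : K) (hc : c ≠ 0) (τ : K ≃ₐ[F] K) (b : K)
    (hb : τ c * c⁻¹ = (σ b) ^ 2) (ε : K) (hε : ε * ε = 1) :
    c * σ ((ε * b) * (ε * b)) = τ c := by
  have hbb : (ε * b) * (ε * b) = b * b := by
    calc (ε * b) * (ε * b) = (ε * ε) * (b * b) := by ring
    _ = b * b := by rw [hε, one_mul]
  rw [hbb, map_mul]
  have hr' : τ c = c * (σ b) ^ 2 := by
    rw [← hb]
    field_simp
  rw [hr']
  ring

/-- Subtype of admissible pairs `(τ, b)`. -/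
abbrev DicksonT (σ : K ≃ₐ[F] K) (c : K) :=
  {pb : (K ≃ₐ[F] K) × K // (∀ x, pb.1 (σ x) = σ (pb.1 x)) ∧ c * σ (pb.2 * pb.2) = pb.1 c}

/-- Subtype of admissible `τ`. -/
abbrev DicksonS (σ : K ≃ₐ[F] K) (c : K) :=
  {τ : K ≃ₐ[F] K // τ * σ = σ * τ ∧ ∃ x : K, τ c * c⁻¹ = x ^ 2}

noncomputable def dicksonPhi (σ : K ≃ₐ[F] K) (c : K) (hc : c ≠ 0) (pb : DicksonT σ c) :
    {G : K × K → K × K // IsDicksonIso F (⇑σ) c (⇑σ) c G} :=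
  ⟨fun p => (pb.1.1 p.1, pb.1.1 p.2 * pb.1.2),
    form_isDicksonIso σ c hc pb.1.1 pb.1.2 pb.2.1 pb.2.2⟩

noncomputable def dicksonB (σ : K ≃ₐ[F] K) (c : K) (τs : DicksonS σ c) : K :=
  σ.symm (Classical.choose τs.2.2)

lemma dicksonB_spec (σ : K ≃ₐ[F] K) (c : K) (τs : DicksonS σ c) :
    τs.1 c * c⁻¹ = (σ (dicksonB σ c τs)) ^ 2 := by
  rw [dicksonB, AlgEquiv.apply_symm_apply]
  exact Classical.choose_spec τs.2.2

lemma dicksonB_ne_zero (σ : K ≃ₐ[F] K) (c : K) (hc : c ≠ 0) (τs : DicksonS σ c) :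
    dicksonB σ c τs ≠ 0 := by
  intro h
  have hs := dicksonB_spec σ c τs
  rw [h, map_zero] at hs
  simp only [ne_eq, zero_pow two_ne_zero, mul_eq_zero] at hs
  rcases (by simpa using hs : τs.1 c = 0 ∨ c⁻¹ = 0) with h' | h'
  · exact hc (τs.1.injective (by simpa using h'))
  · exact hc (inv_eq_zero.mp h')

noncomputable def dicksonPsi (σ : K ≃ₐ[F] K) (c : K) (hc : c ≠ 0)
    (x : Bool × DicksonS σ c) : DicksonT σ c :=
  ⟨(x.2.1, (if x.1 then 1 else -1) * dicksonB σ c x.2),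
    psi_comm σ x.2.1 x.2.2.1,
    psi_cond σ c hc x.2.1 (dicksonB σ c x.2) (dicksonB_spec σ c x.2)
      (if x.1 then 1 else -1) (by split <;> norm_num)⟩

lemma dicksonPhi_bijective [FiniteDimensional F K] (hF : ringChar F ≠ 2)
    (σ : K ≃ₐ[F] K) (hσ : σ ≠ AlgEquiv.refl) (c : K) (hc : c ≠ 0) :
    Function.Bijective (dicksonPhi (F := F) σ c hc) := by
  constructor
  · rintro ⟨⟨τ, b⟩, hτ⟩ ⟨⟨τ', b'⟩, hτ'⟩ h
    have hfun := congrArg Subtype.val h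
    simp only [dicksonPhi] at hfun
    have h1 : ∀ x : K, τ x = τ' x := by
      intro x
      have := congrFun hfun (x, 0)
      exact congrArg Prod.fst this
    have h2 : b = b' := by
      have := congrArg Prod.snd (congrFun hfun (0, 1))
      simpa using this
    simp only [Subtype.mk.injEq, Prod.mk.injEq]
    exact ⟨AlgEquiv.ext h1, h2⟩
  · rintro ⟨G, hG⟩
    obtain ⟨τ, b, h1, h2, h3⟩ := isDicksonIso_form σ hσ c hc hF G hG
    exact ⟨⟨(τ, b), h1, h2⟩, Subtype.ext h3.symm⟩

lemma dicksonPsi_bijective (hF : ringChar F ≠ 2) (σ : K ≃ₐ[F] K) (c : K) (hc : c ≠ 0) :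
    Function.Bijective (dicksonPsi (F := F) σ c hc) := by
  have h2 : (2 : K) ≠ 0 := two_ne_zero_of_base hF
  constructor
  · rintro ⟨β, τs⟩ ⟨β', τs'⟩ h
    have hfun := congrArg Subtype.val h
    simp only [dicksonPsi] at hfun
    have hτ : τs = τs' := Subtype.ext (congrArg Prod.fst hfun)
    subst hτ
    have hb : (if β then (1 : K) else -1) * dicksonB σ c τs
        = (if β' then (1 : K) else -1) * dicksonB σ c τs := congrArg Prod.snd hfun
    have hεeq : (if β then (1 : K) else -1) = (if β' then (1 : K) else -1) :=
      mul_right_cancel₀ (dicksonB_ne_zero σ c hc τs) hb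
    have hβ : β = β' := by
      cases β <;> cases β'
      · rfl
      · norm_num at hεeq
        exact absurd (by linear_combination -hεeq : (2 : K) = 0) h2
      · norm_num at hεeq
        exact absurd (by linear_combination hεeq : (2 : K) = 0) h2
      · rfl
    rw [hβ]
  · rintro ⟨⟨τ, b⟩, hcm, hsq⟩
    have hS1 : τ * σ = σ * τ := by
      ext y
      simp only [AlgEquiv.mul_apply]
      exact hcm y
    have hσb2 : τ c * c⁻¹ = (σ b) ^ 2 := by
      rw [← hsq, map_mul]
      field_simp
    have hS2 : ∃ x : K, τ c * c⁻¹ = x ^ 2 := ⟨σ b, hσb2⟩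
    refine ?_
    set τs : DicksonS σ c := ⟨τ, hS1, hS2⟩ with hτs
    have hr : τ c * c⁻¹ = (σ (dicksonB σ c τs)) ^ 2 := dicksonB_spec σ c τs
    have heq : (σ b) ^ 2 = (σ (dicksonB σ c τs)) ^ 2 := by rw [← hσb2, hr]
    have hfac : (σ b - σ (dicksonB σ c τs)) * (σ b + σ (dicksonB σ c τs)) = 0 := by
      linear_combination heq
    rcases mul_eq_zero.mp hfac with hcase | hcase
    · refine ⟨(true, τs), Subtype.ext (Prod.ext rfl ?_)⟩
      have hb' : b = dicksonB σ c τs := σ.injective (sub_eq_zero.mp hcase)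
      simp only [dicksonPsi, if_true, one_mul]
      exact hb'.symm
    · refine ⟨(false, τs), Subtype.ext (Prod.ext rfl ?_)⟩
      have hb' : σ b = -σ (dicksonB σ c τs) := by linear_combination hcase
      have hb'' : b = -dicksonB σ c τs := by
        apply σ.injective
        rw [map_neg]
        exact hb'
      simp only [dicksonPsi]
      rw [hb'']
      norm_num
end Aux

theorem stmt11 (F K : Type*) [Field F] [Field K] [Algebra F K] [FiniteDimensional F K]
    (hF : ringChar F ≠ 2) (σ : K ≃ₐ[F] K) (hσ : σ ≠ AlgEquiv.refl) (c : K) (hc : c ≠ 0) :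
    Nat.card {G : K × K → K × K // IsDicksonIso F σ c σ c G}
      = 2 * Nat.card {τ : K ≃ₐ[F] K //
          τ * σ = σ * τ ∧ ∃ x : K, τ c * c⁻¹ = x ^ 2} := by
  have e1 : Nat.card {G : K × K → K × K // IsDicksonIso F (⇑σ) c (⇑σ) c G}
      = Nat.card (DicksonT σ c) :=
    (Nat.card_eq_of_bijective _ (dicksonPhi_bijective hF σ hσ c hc)).symm
  have e2 : Nat.card (DicksonT σ c) = Nat.card (Bool × DicksonS σ c) :=
    (Nat.card_eq_of_bijective _ (dicksonPsi_bijective hF σ c hc)).symm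
  rw [e1, e2, Nat.card_prod]
  congr 1
  simp [Nat.card_eq_fintype_card]
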